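/- arXiv:2304.12375 — 2 statements merged into one kernel-verified Lean document; each statement's English description precedes it below -/
import Mathlib

section
/- Let F : [a,b] → K(ℝ^d) be of bounded variation with compact graph, let c be a chain function of F based on a partition χ = {a = x_0 < … < x_n = b}, and suppose a ≤ α < x_j ≤ β ≤ b for some x_j ∈ χ. Then V_{x_j}^{β}(c) ≤ ω̃⁺(v_F, α, β−α), where ω̃⁺ is the right local quasi-modulus and v_F the variation function of F. -/
open Filter Metric Topology Set TopologicalSpace

noncomputable section

/-- The set of projections of `x` on `B`: points of `B` nearest to `x`. -/
def metricProj {E : Type*} [MetricSpace E] (x : E) (B : Set E) : Set E :=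
  {b ∈ B | dist x b = Metric.infDist x B}

/-- The set of metric pairs of `A` and `B`. -/
def MetricPairs {E : Type*} [MetricSpace E] (A B : Set E) : Set (E × E) :=
  {p | p.1 ∈ A ∧ p.2 ∈ B ∧ (p.1 ∈ metricProj p.2 A ∨ p.2 ∈ metricProj p.1 B)}

/-- A partition `a = x_0 < x_1 < ... < x_n = b` of `[a,b]`. -/
structure RealPartition (a b : ℝ) where
  n : ℕ
  pts : Fin (n + 1) → ℝ
  mono : StrictMono pts
  first : pts 0 = a
  last : pts (Fin.last n) = b

/-- The norm `|χ| = max_i (x_{i+1} - x_i)` of a partition. -/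
noncomputable def RealPartition.meshNorm {a b : ℝ} (χ : RealPartition a b) : ℝ :=
  ⨆ i : Fin χ.n, (χ.pts i.succ - χ.pts i.castSucc)

/-- `c` is a chain function of the set-valued function `F` based on the partition `χ`:
it is piecewise constant, with values at consecutive partition points forming metric pairs
of the corresponding values of `F`. -/
def IsChainFun {E : Type*} [MetricSpace E] {a b : ℝ}
    (F : ℝ → Set E) (χ : RealPartition a b) (c : ℝ → E) : Prop :=
  ∃ y : Fin (χ.n + 1) → E,
    (∀ i : Fin χ.n,
      (y i.castSucc, y i.succ) ∈ MetricPairs (F (χ.pts i.castSucc)) (F (χ.pts i.succ))) ∧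
    (∀ i : Fin χ.n, ∀ t ∈ Set.Ico (χ.pts i.castSucc) (χ.pts i.succ), c t = y i.castSucc) ∧
    c b = y (Fin.last χ.n)

/-- `s` is a metric selection of `F` on `[a,b]`: a selection of `F` which is the pointwise
limit of a sequence of chain functions of `F` whose partition norms tend to `0`. -/
def IsMetricSelection {E : Type*} [MetricSpace E] (F : ℝ → Set E) (a b : ℝ) (s : ℝ → E) : Prop :=
  (∀ x ∈ Set.Icc a b, s x ∈ F x) ∧
  ∃ χ : ℕ → RealPartition a b, ∃ c : ℕ → ℝ → E,
    (∀ k, IsChainFun F (χ k) (c k)) ∧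
    Filter.Tendsto (fun k => (χ k).meshNorm) Filter.atTop (nhds 0) ∧
    ∀ x ∈ Set.Icc a b, Filter.Tendsto (fun k => c k x) Filter.atTop (nhds (s x))

/-- Property 2 of `F` at `ξ`, with `Fm = F(ξ-)`, `Fp = F(ξ+)`: every metric pair of the
one-sided limits is a limit of metric pairs `(y_n^-, y_n^+) ∈ Π(F(ξ_n^-), F(ξ_n^+))`
with `ξ_n^- < ξ < ξ_n^+`, `ξ_n^± → ξ`. -/
def Property2 {E : Type*} [MetricSpace E] (F : ℝ → Set E) (a b ξ : ℝ)
    (Fm Fp : Set E) : Prop :=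
  ∀ ym yp : E, (ym, yp) ∈ MetricPairs Fm Fp →
    ∃ ξm ξp : ℕ → ℝ, ∃ ym' yp' : ℕ → E,
      (∀ n, ξm n ∈ Set.Ico a ξ) ∧ (∀ n, ξp n ∈ Set.Ioc ξ b) ∧
      Filter.Tendsto ξm Filter.atTop (nhds ξ) ∧ Filter.Tendsto ξp Filter.atTop (nhds ξ) ∧
      (∀ n, (ym' n, yp' n) ∈ MetricPairs (F (ξm n)) (F (ξp n))) ∧
      Filter.Tendsto ym' Filter.atTop (nhds ym) ∧ Filter.Tendsto yp' Filter.atTop (nhds yp)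

/-- The metric average `(1/2) A ⊕ (1/2) B = {(a+b)/2 : (a,b) ∈ Π(A,B)}`. -/
def metricAvg {E : Type*} [NormedAddCommGroup E] [NormedSpace ℝ E] (A B : Set E) : Set E :=
  {v | ∃ p ∈ MetricPairs A B, v = (2⁻¹ : ℝ) • (p.1 + p.2)}

/-- The limit set `A_F(x) = {(s(x-) + s(x+))/2 : s a metric selection of F}`. -/
def limitSet {E : Type*} [NormedAddCommGroup E] [NormedSpace ℝ E]
    (F : ℝ → Set E) (a b x : ℝ) : Set E :=
  {v | ∃ s : ℝ → E, ∃ sm sp : E, IsMetricSelection F a b s ∧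
      Filter.Tendsto s (nhdsWithin x (Set.Ico a x)) (nhds sm) ∧
      Filter.Tendsto s (nhdsWithin x (Set.Ioc x b)) (nhds sp) ∧
      v = (2⁻¹ : ℝ) • (sm + sp)}

/-- The left local quasi-modulus `ω̃⁻(f, xs, δ)` of `f` at `xs`, where `fl = f(xs-)`. -/
noncomputable def qmodLeft {X : Type*} [PseudoMetricSpace X]
    (f : ℝ → X) (fl : X) (a b xs δ : ℝ) : ℝ :=
  sSup {r | ∃ x ∈ Set.Ico (xs - δ) xs ∩ Set.Icc a b, r = dist fl (f x)}

/-- The right local quasi-modulus `ω̃⁺(f, xs, δ)` of `f` at `xs`, where `fr = f(xs+)`. -/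
noncomputable def qmodRight {X : Type*} [PseudoMetricSpace X]
    (f : ℝ → X) (fr : X) (a b xs δ : ℝ) : ℝ :=
  sSup {r | ∃ x ∈ Set.Ioc xs (xs + δ) ∩ Set.Icc a b, r = dist fr (f x)}

/-- The graph of a set-valued function on `[a,b]` is compact. -/
def HasCompactGraph {E : Type*} [MetricSpace E] (F : ℝ → Set E) (a b : ℝ) : Prop :=
  IsCompact {p : ℝ × E | p.1 ∈ Set.Icc a b ∧ p.2 ∈ F p.1}

/-- The (real-valued) variation function `v_f(x) = V_a^x(f)`. -/
noncomputable def varFun {X : Type*} [PseudoEMetricSpace X] (f : ℝ → X) (a x : ℝ) : ℝ :=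
  (eVariationOn f (Set.Icc a x)).toReal

/-- Upper Kuratowski limit of a sequence of sets in a topological space. -/
def kuratowskiLimsup {X : Type*} [TopologicalSpace X] (C : ℕ → Set X) : Set X :=
  {x | ∃ φ : ℕ → ℕ, StrictMono φ ∧ ∃ c : ℕ → X,
    (∀ k, c k ∈ C (φ k)) ∧ Filter.Tendsto c Filter.atTop (nhds x)}

/-- for a chain function `c` of `F` based on `χ` and `a ≤ α < x_j ≤ β ≤ b`,
`V_{x_j}^β(c) ≤ ω̃⁺(v_F, α, β - α)`. -/
theorem stmt_9 {d : ℕ} (a b : ℝ) (hab : a < b)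
    (F : ℝ → NonemptyCompacts (EuclideanSpace ℝ (Fin d)))
    (hBV : BoundedVariationOn F (Set.Icc a b))
    (hgraph : HasCompactGraph (fun t => (F t : Set (EuclideanSpace ℝ (Fin d)))) a b)
    (χ : RealPartition a b) (c : ℝ → EuclideanSpace ℝ (Fin d))
    (hc : IsChainFun (fun t => (F t : Set (EuclideanSpace ℝ (Fin d)))) χ c)
    (α β : ℝ) (j : Fin (χ.n + 1))
    (hα : a ≤ α) (hαj : α < χ.pts j) (hjβ : χ.pts j ≤ β) (hβ : β ≤ b)
    (vr : ℝ)
    (hvr : Filter.Tendsto (fun x => varFun F a x) (nhdsWithin α (Set.Ioc α b)) (nhds vr)) :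
    (eVariationOn c (Set.Icc (χ.pts j) β)).toReal ≤
      qmodRight (fun x => varFun F a x) vr a b α (β - α) := by
  classical
  obtain ⟨y, hpair, hico, hcb⟩ := hc
  set v : ℝ → ℝ := fun x => varFun F a x with hvdef
  -- partition points lie in [a,b]
  have hptsmem : ∀ k : Fin (χ.n + 1), χ.pts k ∈ Set.Icc a b := by
    intro k
    constructor
    · have h := χ.mono.monotone (Fin.zero_le k); rwa [χ.first] at h
    · have h := χ.mono.monotone (Fin.le_last k); rwa [χ.last] at h
  -- monotonicity of v
  have hvmono : ∀ x z : ℝ, a ≤ x → x ≤ z → z ≤ b → v x ≤ v z := by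
    intro x z hax hxz hzb
    have hfin : eVariationOn F (Set.Icc a z) ≠ ⊤ :=
      fun h => hBV (top_le_iff.mp (h ▸ eVariationOn.mono F (Set.Icc_subset_Icc le_rfl hzb)))
    exact ENNReal.toReal_mono hfin
      (eVariationOn.mono F (Set.Icc_subset_Icc le_rfl hxz))
  have hvnonneg : ∀ x, 0 ≤ v x := fun x => ENNReal.toReal_nonneg
  -- Hausdorff distance bound through variation
  have hF : ∀ x z : ℝ, a ≤ x → x ≤ z → z ≤ b → dist (F x) (F z) ≤ v z - v x := by
    intro x z hax hxz hzb
    have hsplit := eVariationOn.Icc_add_Icc F (s := Set.Icc a z) hax hxz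
      ⟨hax, hxz⟩
    rw [Set.inter_eq_self_of_subset_right (Set.Icc_subset_Icc le_rfl hxz),
      Set.inter_eq_self_of_subset_right (Set.Icc_subset_Icc hax le_rfl),
      Set.inter_self] at hsplit
    have hfinz : eVariationOn F (Set.Icc a z) ≠ ⊤ :=
      fun h => hBV (top_le_iff.mp (h ▸ eVariationOn.mono F (Set.Icc_subset_Icc le_rfl hzb)))
    have hfinx : eVariationOn F (Set.Icc a x) ≠ ⊤ :=
      fun h => hBV (top_le_iff.mp (h ▸ eVariationOn.mono F (Set.Icc_subset_Icc le_rfl (hxz.trans hzb))))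
    have hfinxz : eVariationOn F (Set.Icc x z) ≠ ⊤ :=
      fun h => hBV (top_le_iff.mp (h ▸ eVariationOn.mono F (Set.Icc_subset_Icc hax hzb)))
    have hedist : edist (F x) (F z) ≤ eVariationOn F (Set.Icc x z) :=
      eVariationOn.edist_le F ⟨le_rfl, hxz⟩ ⟨hxz, le_rfl⟩
    have hdist : dist (F x) (F z) ≤ (eVariationOn F (Set.Icc x z)).toReal := by
      rw [dist_edist]
      exact ENNReal.toReal_mono hfinxz hedist
    have : v z = v x + (eVariationOn F (Set.Icc x z)).toReal := by
      show (eVariationOn F (Set.Icc a z)).toReal = _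
      rw [← hsplit, ENNReal.toReal_add hfinx hfinxz]; rfl
    linarith
  -- metric pair step bound
  have hstep : ∀ i : Fin χ.n,
      dist (y i.castSucc) (y i.succ) ≤ v (χ.pts i.succ) - v (χ.pts i.castSucc) := by
    intro i
    obtain ⟨hy1, hy2, hy3⟩ := hpair i
    have hfin : EMetric.hausdorffEdist
        ((F (χ.pts i.castSucc) : Set (EuclideanSpace ℝ (Fin d))))
        ((F (χ.pts i.succ) : Set (EuclideanSpace ℝ (Fin d)))) ≠ ⊤ :=
      Metric.hausdorffEdist_ne_top_of_nonempty_of_bounded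
        (F (χ.pts i.castSucc)).nonempty (F (χ.pts i.succ)).nonempty
        (F (χ.pts i.castSucc)).isCompact.isBounded (F (χ.pts i.succ)).isCompact.isBounded
    have hd : dist (y i.castSucc) (y i.succ) ≤ dist (F (χ.pts i.castSucc)) (F (χ.pts i.succ)) := by
      rw [NonemptyCompacts.dist_eq]
      rcases hy3 with h | h
      · obtain ⟨-, hd⟩ := h
        rw [dist_comm, hd]
        rw [Metric.hausdorffDist_comm]
        exact Metric.infDist_le_hausdorffDist_of_mem hy2 (by rwa [EMetric.hausdorffEdist_comm])
      · obtain ⟨-, hd⟩ := h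
        rw [hd]
        exact Metric.infDist_le_hausdorffDist_of_mem hy1 hfin
    refine hd.trans (hF _ _ (hptsmem i.castSucc).1
      (χ.mono.monotone (Fin.castSucc_lt_succ : i.castSucc < i.succ).le) (hptsmem i.succ).2)
  -- chain bound by telescoping
  have hchain : ∀ k' k : Fin (χ.n + 1), k ≤ k' →
      dist (y k) (y k') ≤ v (χ.pts k') - v (χ.pts k) := by
    intro k'
    induction k' using Fin.induction with
    | zero =>
      intro k hk
      have : k = 0 := le_antisymm hk (Fin.zero_le k)
      subst this; simp
    | succ i ih =>
      intro k hk
      rcases eq_or_ne k i.succ with rfl | hne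
      · simp
      · have hk' : k ≤ i.castSucc := by
          rw [Fin.le_def] at hk ⊢
          rw [Fin.ne_iff_vne] at hne
          simp only [Fin.val_succ, Fin.coe_castSucc] at *
          omega
        calc dist (y k) (y i.succ) ≤ dist (y k) (y i.castSucc) + dist (y i.castSucc) (y i.succ) :=
              dist_triangle _ _ _
          _ ≤ (v (χ.pts i.castSucc) - v (χ.pts k)) + (v (χ.pts i.succ) - v (χ.pts i.castSucc)) :=
              add_le_add (ih k hk') (hstep i)
          _ = v (χ.pts i.succ) - v (χ.pts k) := by ring
  -- index of the interval containing x
  have hidx : ∀ x : ℝ, a ≤ x → ∃ k : Fin (χ.n + 1),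
      χ.pts k ≤ x ∧ ∀ k' : Fin (χ.n + 1), χ.pts k' ≤ x → k' ≤ k := by
    intro x hx
    have hne : (Finset.univ.filter (fun k : Fin (χ.n + 1) => χ.pts k ≤ x)).Nonempty :=
      ⟨0, by simp [χ.first, hx]⟩
    refine ⟨(Finset.univ.filter (fun k : Fin (χ.n + 1) => χ.pts k ≤ x)).max' hne, ?_, ?_⟩
    · have := Finset.max'_mem _ hne
      simpa using this
    · intro k' hk'
      exact Finset.le_max' _ k' (by simpa using hk')
  -- value of c at maximal index
  have hcx : ∀ (x : ℝ), a ≤ x → x ≤ b → ∀ k : Fin (χ.n + 1),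
      χ.pts k ≤ x → (∀ k' : Fin (χ.n + 1), χ.pts k' ≤ x → k' ≤ k) → c x = y k := by
    intro x hax hxb k hk hkmax
    rcases eq_or_lt_of_le hxb with rfl | hxb
    · have hlast : k = Fin.last χ.n := by
        refine le_antisymm (Fin.le_last k) (hkmax _ (le_of_eq χ.last))
      rw [hlast]; exact hcb
    · have hklt : k < Fin.last χ.n := by
        have : χ.pts k < χ.pts (Fin.last χ.n) := lt_of_le_of_lt hk (by rwa [χ.last])
        exact χ.mono.lt_iff_lt.mp this
      set i : Fin χ.n := k.castPred (Fin.ne_last_of_lt hklt) with hi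
      have hik : i.castSucc = k := Fin.castSucc_castPred k _
      have hxlt : x < χ.pts i.succ := by
        by_contra h
        push_neg at h
        have : i.succ ≤ k := hkmax i.succ h
        rw [← hik] at this
        exact absurd this (not_le.mpr (Fin.castSucc_lt_succ : i.castSucc < i.succ))
      rw [← hik]
      exact (hico i x ⟨hik ▸ hk, hxlt⟩)
  -- the main variation bound
  have key : eVariationOn c (Set.Icc (χ.pts j) β) ≤ ENNReal.ofReal (v β - v (χ.pts j)) := by
    unfold eVariationOn
    apply iSup_le
    rintro ⟨m, u, hu, hus⟩
    have hmemu : ∀ i, u i ∈ Set.Icc (χ.pts j) β := hus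
    have hau : ∀ i, a ≤ u i := fun i => le_trans (hptsmem j).1 (hmemu i).1
    have hub : ∀ i, u i ≤ b := fun i => le_trans (hmemu i).2 hβ
    choose k hk1 hk2 using fun i => hidx (u i) (hau i)
    have hcu : ∀ i, c (u i) = y (k i) := fun i =>
      hcx (u i) (hau i) (hub i) (k i) (hk1 i) (hk2 i)
    have hkmono : ∀ i i' : ℕ, i ≤ i' → k i ≤ k i' := fun i i' h =>
      hk2 i' (k i) (le_trans (hk1 i) (hu h))
    set w : ℕ → ℝ := fun i => v (χ.pts (k i)) with hw
    have hwmono : ∀ i i' : ℕ, i ≤ i' → w i ≤ w i' := by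
      intro i i' h
      exact hvmono _ _ (hptsmem (k i)).1 (χ.mono.monotone (hkmono i i' h)) (hptsmem (k i')).2
    calc (∑ i ∈ Finset.range m, edist (c (u (i + 1))) (c (u i)))
        ≤ ∑ i ∈ Finset.range m, ENNReal.ofReal (w (i + 1) - w i) := by
          apply Finset.sum_le_sum
          intro i _
          rw [hcu, hcu, edist_dist, dist_comm]
          exact ENNReal.ofReal_le_ofReal (hchain (k (i + 1)) (k i) (hkmono i (i + 1) (by omega)))
      _ = ENNReal.ofReal (∑ i ∈ Finset.range m, (w (i + 1) - w i)) := by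
          rw [ENNReal.ofReal_sum_of_nonneg]
          intro i _
          exact sub_nonneg.mpr (hwmono i (i + 1) (by omega))
      _ = ENNReal.ofReal (w m - w 0) := by rw [Finset.sum_range_sub]
      _ ≤ ENNReal.ofReal (v β - v (χ.pts j)) := by
          apply ENNReal.ofReal_le_ofReal
          have h1 : w m ≤ v β :=
            hvmono _ _ (hptsmem (k m)).1 (le_trans (hk1 m) (hmemu m).2) hβ
          have h2 : v (χ.pts j) ≤ w 0 :=
            hvmono _ _ (hptsmem j).1 (χ.mono.monotone (hk2 0 j (hmemu 0).1)) (hptsmem (k 0)).2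
          linarith
  have hvjβ : v (χ.pts j) ≤ v β := hvmono _ _ (hptsmem j).1 hjβ hβ
  have h1 : (eVariationOn c (Set.Icc (χ.pts j) β)).toReal ≤ v β - v (χ.pts j) :=
    ENNReal.toReal_le_of_le_ofReal (by linarith) key
  -- vr ≤ v (χ.pts j)
  have hαb : α < b := lt_of_lt_of_le hαj (le_trans hjβ hβ)
  have hnebot : (nhdsWithin α (Set.Ioc α b)).NeBot := by
    rw [← mem_closure_iff_nhdsWithin_neBot, closure_Ioc (ne_of_lt hαb)]
    exact ⟨le_rfl, hαb.le⟩
  have hvrle : vr ≤ v (χ.pts j) := by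
    refine le_of_tendsto hvr ?_
    have h1' : ∀ᶠ x in nhdsWithin α (Set.Ioc α b), x < χ.pts j :=
      eventually_nhdsWithin_of_eventually_nhds (Iio_mem_nhds hαj)
    have h2' : ∀ᶠ x in nhdsWithin α (Set.Ioc α b), x ∈ Set.Ioc α b :=
      eventually_mem_nhdsWithin
    filter_upwards [h1', h2'] with x hx1 hx2
    exact hvmono x (χ.pts j) (le_trans hα hx2.1.le) hx1.le (hptsmem j).2
  -- conclude via the quasi-modulus
  have hmem : v β - v (χ.pts j) ≤ dist vr (v β) := by
    rw [Real.dist_eq]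
    calc v β - v (χ.pts j) ≤ v β - vr := by linarith
      _ ≤ |v β - vr| := le_abs_self _
      _ = |vr - v β| := abs_sub_comm _ _
  refine h1.trans (hmem.trans ?_)
  unfold qmodRight
  apply le_csSup
  · refine ⟨|vr| + v b, ?_⟩
    rintro r ⟨x, ⟨hx1, hx2⟩, rfl⟩
    calc dist vr (v x) ≤ |vr| + |v x| := by
          rw [Real.dist_eq]; exact abs_sub _ _
      _ ≤ |vr| + v b := by
          rw [abs_of_nonneg (hvnonneg x)]
          linarith [hvmono x b hx2.1 hx2.2 le_rfl]
  · refine ⟨β, ⟨⟨lt_of_lt_of_le hαj hjβ, by linarith⟩, le_trans hα (le_of_lt (lt_of_lt_of_le hαj hjβ)), hβ⟩, rfl⟩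
end
end

section
/- Let F : [a,b] → K(ℝ^d) be of bounded variation with compact graph and let ξ ∈ (a,b) be a point at which F satisfies Property 2. Then (1/2)F(ξ−) ⊕ (1/2)F(ξ+) ⊆ A_F(ξ), i.e., for every metric pair (y⁻, y⁺) ∈ Π(F(ξ−), F(ξ+)) there exists a metric selection s of F with s(ξ−) = y⁻ and s(ξ+) = y⁺, whence (y⁻+y⁺)/2 ∈ A_F(ξ). -/
open Filter Metric Topology Set TopologicalSpace

noncomputable section

section Aux
variable {E : Type*} [MetricSpace E]

lemma metricProj_nonempty {B : Set E} (hB : IsCompact B) (hne : B.Nonempty) (x : E) :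
    (metricProj x B).Nonempty := by
  obtain ⟨y, hy, hxy⟩ := hB.exists_infDist_eq_dist hne x
  exact ⟨y, hy, hxy.symm⟩

lemma MetricPairs.dist_le' {A B : Set E} (hA : IsCompact A) (hAne : A.Nonempty)
    (hB : IsCompact B) (hBne : B.Nonempty) {p : E × E} (hp : p ∈ MetricPairs A B) :
    dist p.1 p.2 ≤ hausdorffDist A B := by
  obtain ⟨h1, h2, h3 | h3⟩ := hp
  · rw [dist_comm, h3.2, hausdorffDist_comm]
    exact infDist_le_hausdorffDist_of_mem h2
      (hausdorffEdist_ne_top_of_nonempty_of_bounded hBne hAne hB.isBounded hA.isBounded)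
  · rw [h3.2]
    exact infDist_le_hausdorffDist_of_mem h1
      (hausdorffEdist_ne_top_of_nonempty_of_bounded hAne hBne hA.isBounded hB.isBounded)

lemma MetricPairs.dist_le {A B : NonemptyCompacts E} {p : E × E}
    (hp : p ∈ MetricPairs (A : Set E) (B : Set E)) :
    dist p.1 p.2 ≤ dist A B := by
  rw [NonemptyCompacts.dist_eq]
  exact MetricPairs.dist_le' A.isCompact A.nonempty B.isCompact B.nonempty hp

/-! ### The variation function -/

section Vfun

variable {X : Type*} [PseudoMetricSpace X]

noncomputable def vfun (f : ℝ → X) (a b x : ℝ) : ℝ :=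
  (eVariationOn f (Set.Icc a (min b x))).toReal

lemma vfun_ne_top {f : ℝ → X} {a b : ℝ} (hBV : BoundedVariationOn f (Set.Icc a b)) (x : ℝ) :
    eVariationOn f (Set.Icc a (min b x)) ≠ ⊤ :=
  fun h => hBV (eq_top_iff.2 (h ▸ eVariationOn.mono f (Icc_subset_Icc le_rfl (min_le_left _ _))))

lemma vfun_mono {f : ℝ → X} {a b : ℝ} (hBV : BoundedVariationOn f (Set.Icc a b)) :
    Monotone (vfun f a b) := by
  intro x y hxy
  exact ENNReal.toReal_mono (vfun_ne_top hBV y)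
    (eVariationOn.mono f (Icc_subset_Icc le_rfl (min_le_min le_rfl hxy)))

lemma vfun_eq {f : ℝ → X} {a b x : ℝ} (hx : x ∈ Set.Icc a b) :
    vfun f a b x = (eVariationOn f (Set.Icc a x)).toReal := by
  rw [vfun, min_eq_right hx.2]

lemma vfun_add {f : ℝ → X} {a b : ℝ} (hBV : BoundedVariationOn f (Set.Icc a b))
    {u v : ℝ} (hu : u ∈ Set.Icc a b) (hv : v ∈ Set.Icc a b) (huv : u ≤ v) :
    vfun f a b v = vfun f a b u + (eVariationOn f (Set.Icc u v)).toReal := by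
  rw [vfun_eq hu, vfun_eq hv]
  have h := eVariationOn.Icc_add_Icc f (s := Set.univ) hu.1 huv (mem_univ u)
  simp only [Set.univ_inter] at h
  rw [← h, ENNReal.toReal_add]
  · exact fun ht => hBV (eq_top_iff.2 (ht ▸ eVariationOn.mono f (Icc_subset_Icc le_rfl hu.2)))
  · exact fun ht => hBV (eq_top_iff.2 (ht ▸ eVariationOn.mono f (Icc_subset_Icc hu.1 hv.2)))

lemma dist_le_vfun {f : ℝ → X} {a b : ℝ} (hBV : BoundedVariationOn f (Set.Icc a b))
    {u v : ℝ} (hu : u ∈ Set.Icc a b) (hv : v ∈ Set.Icc a b) (huv : u ≤ v) :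
    dist (f u) (f v) ≤ vfun f a b v - vfun f a b u := by
  rw [vfun_add hBV hu hv huv]
  have h1 : edist (f u) (f v) ≤ eVariationOn f (Set.Icc u v) :=
    eVariationOn.edist_le f (Set.left_mem_Icc.2 huv) (Set.right_mem_Icc.2 huv)
  have h2 : eVariationOn f (Set.Icc u v) ≠ ⊤ :=
    fun ht => hBV (eq_top_iff.2 (ht ▸ eVariationOn.mono f (Icc_subset_Icc hu.1 hv.2)))
  rw [dist_edist]
  have := ENNReal.toReal_mono h2 h1
  linarith

end Vfun

end Aux

namespace RealPartition

variable {a b : ℝ}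

lemma pts_mem_Icc (χ : RealPartition a b) (i : Fin (χ.n + 1)) : χ.pts i ∈ Set.Icc a b := by
  have h1 := χ.mono.monotone (Fin.zero_le i)
  have h2 := χ.mono.monotone (Fin.le_last i)
  rw [χ.first] at h1
  rw [χ.last] at h2
  exact ⟨h1, h2⟩

lemma meshNorm_nonneg (χ : RealPartition a b) : 0 ≤ χ.meshNorm :=
  Real.iSup_nonneg fun i => sub_nonneg.2 (χ.mono.monotone i.castSucc_le_succ)

lemma gap_le_meshNorm (χ : RealPartition a b) (i : Fin χ.n) :
    χ.pts i.succ - χ.pts i.castSucc ≤ χ.meshNorm :=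
  le_ciSup (f := fun i : Fin χ.n => χ.pts i.succ - χ.pts i.castSucc)
    (Set.Finite.bddAbove (Set.finite_range _)) i

lemma n_pos (χ : RealPartition a b) (hab : a < b) : 0 < χ.n := by
  rcases Nat.eq_zero_or_pos χ.n with h | h
  · exfalso
    have : χ.pts 0 = χ.pts (Fin.last χ.n) := by congr 1; ext; simp [h]
    rw [χ.first, χ.last] at this
    exact absurd this (ne_of_lt hab)
  · exact h

lemma exists_ofFinset (hab : a < b) (s : Finset ℝ) (ha : a ∈ s) (hb : b ∈ s)
    (hsub : ∀ x ∈ s, x ∈ Set.Icc a b) :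
    ∃ χ : RealPartition a b, (∀ i, χ.pts i ∈ s) ∧ ∀ x ∈ s, ∃ i, χ.pts i = x := by
  have hpos : 0 < s.card := Finset.card_pos.2 ⟨a, ha⟩
  have hcard : s.card = (s.card - 1) + 1 := (Nat.succ_pred_eq_of_pos hpos).symm
  set f := s.orderEmbOfFin hcard with hf
  have hmem : ∀ i, f i ∈ s := fun i => Finset.orderEmbOfFin_mem _ _ _
  have hsurj : ∀ x ∈ s, ∃ i, f i = x := by
    intro x hx
    have : x ∈ Set.range f := by rw [hf, Finset.range_orderEmbOfFin]; exact hx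
    exact this
  have hfirst : f 0 = a := by
    refine le_antisymm ?_ (hsub _ (hmem 0)).1
    obtain ⟨j, hj⟩ := hsurj a ha
    rw [← hj]
    exact f.monotone (Fin.zero_le j)
  have hlast : f (Fin.last _) = b := by
    refine le_antisymm (hsub _ (hmem _)).2 ?_
    obtain ⟨j, hj⟩ := hsurj b hb
    rw [← hj]
    exact f.monotone (Fin.le_last j)
  exact ⟨⟨s.card - 1, f, f.strictMono, hfirst, hlast⟩, hmem, hsurj⟩

lemma meshNorm_le (hab : a < b) {s : Finset ℝ} (χ : RealPartition a b)
    (hmem : ∀ i, χ.pts i ∈ s) (hsurj : ∀ x ∈ s, ∃ i, χ.pts i = x) {δ : ℝ}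
    (hgap : ∀ x ∈ s, x < b → ∃ y ∈ s, x < y ∧ y ≤ x + δ) :
    χ.meshNorm ≤ δ := by
  have : Nonempty (Fin χ.n) := ⟨⟨0, χ.n_pos hab⟩⟩
  refine ciSup_le fun i => ?_
  have hxlt : χ.pts i.castSucc < b := by
    have := χ.mono (Fin.castSucc_lt_last i)
    rwa [χ.last] at this
  obtain ⟨y, hy, hxy, hyle⟩ := hgap _ (hmem i.castSucc) hxlt
  obtain ⟨j, hj⟩ := hsurj y hy
  have hij : i.castSucc < j := χ.mono.lt_iff_lt.1 (by rw [hj]; exact hxy)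
  have h2 : χ.pts i.succ ≤ χ.pts j :=
    χ.mono.monotone (Fin.castSucc_lt_iff_succ_le.mp hij)
  rw [hj] at h2
  linarith

end RealPartition


section Chain
variable {E : Type*} [MetricSpace E] (F : ℝ → NonemptyCompacts E)

noncomputable def projStep (t : ℝ) (x : E) : E :=
  (metricProj_nonempty (F t).isCompact (F t).nonempty x).some

lemma projStep_mem (t : ℝ) (x : E) : projStep F t x ∈ metricProj x (F t : Set E) :=
  Set.Nonempty.some_mem _

noncomputable def chainBelow (P : ℕ → ℝ) (i0 : ℕ) (ym : E) : ℕ → E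
  | 0 => ym
  | (k+1) => projStep F (P (i0 - (k+1))) (chainBelow P i0 ym k)

noncomputable def chainAbove (P : ℕ → ℝ) (i0 : ℕ) (yp : E) : ℕ → E
  | 0 => yp
  | (k+1) => projStep F (P (i0 + 1 + (k+1))) (chainAbove P i0 yp k)

noncomputable def chainY (P : ℕ → ℝ) (i0 : ℕ) (ym yp : E) : ℕ → E :=
  fun j => if j ≤ i0 then chainBelow F P i0 ym (i0 - j) else chainAbove F P i0 yp (j - (i0+1))

variable {P : ℕ → ℝ} {i0 : ℕ} {ym yp : E}

lemma chainBelow_mem (hym : ym ∈ (F (P i0) : Set E)) :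
    ∀ k, chainBelow F P i0 ym k ∈ (F (P (i0 - k)) : Set E)
  | 0 => by simpa [chainBelow] using hym
  | (k+1) => (projStep_mem F _ _).1

lemma chainAbove_mem (hyp : yp ∈ (F (P (i0 + 1)) : Set E)) :
    ∀ k, chainAbove F P i0 yp k ∈ (F (P (i0 + 1 + k)) : Set E)
  | 0 => by simpa [chainAbove] using hyp
  | (k+1) => (projStep_mem F _ _).1

lemma chainY_mem (hym : ym ∈ (F (P i0) : Set E)) (hyp : yp ∈ (F (P (i0 + 1)) : Set E))
    (j : ℕ) : chainY F P i0 ym yp j ∈ (F (P j) : Set E) := by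
  rw [chainY]
  by_cases h : j ≤ i0
  · rw [if_pos h]
    have := chainBelow_mem F hym (i0 - j)
    rwa [Nat.sub_sub_self h] at this
  · rw [if_neg h]
    have := chainAbove_mem F hyp (j - (i0 + 1))
    rwa [Nat.add_sub_cancel' (by omega : i0 + 1 ≤ j)] at this

lemma chainY_anchor_left : chainY F P i0 ym yp i0 = ym := by
  rw [chainY]; simp [chainBelow]

lemma chainY_anchor_right : chainY F P i0 ym yp (i0 + 1) = yp := by
  rw [chainY]; simp [chainAbove]

lemma chainY_pairs
    (hpair : (ym, yp) ∈ MetricPairs (F (P i0) : Set E) (F (P (i0 + 1)) : Set E))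
    (j : ℕ) : (chainY F P i0 ym yp j, chainY F P i0 ym yp (j + 1)) ∈
      MetricPairs (F (P j) : Set E) (F (P (j + 1)) : Set E) := by
  have hym : ym ∈ (F (P i0) : Set E) := hpair.1
  have hyp : yp ∈ (F (P (i0 + 1)) : Set E) := hpair.2.1
  rcases lt_trichotomy j i0 with h | h | h
  · -- both below the anchor
    have e1 : chainY F P i0 ym yp j = projStep F (P j) (chainY F P i0 ym yp (j + 1)) := by
      rw [chainY, chainY, if_pos (le_of_lt h), if_pos (by omega : j + 1 ≤ i0)]
      have e2 : i0 - j = (i0 - (j + 1)) + 1 := by omega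
      have e3 : i0 - ((i0 - (j + 1)) + 1) = j := by omega
      rw [e2, chainBelow, e3]
    refine ⟨?_, chainY_mem F hym hyp (j + 1), Or.inl ?_⟩
    · rw [e1]; exact (projStep_mem F _ _).1
    · rw [e1]; exact projStep_mem F _ _
  · subst h
    rw [chainY_anchor_left, chainY_anchor_right]
    exact hpair
  · -- both above the anchor
    have e1 : chainY F P i0 ym yp (j + 1) = projStep F (P (j + 1)) (chainY F P i0 ym yp j) := by
      rw [chainY, chainY, if_neg (by omega), if_neg (by omega)]
      have e2 : j + 1 - (i0 + 1) = (j - (i0 + 1)) + 1 := by omega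
      have e3 : i0 + 1 + ((j - (i0 + 1)) + 1) = j + 1 := by omega
      rw [e2, chainAbove, e3]
    refine ⟨chainY_mem F hym hyp j, ?_, Or.inr ?_⟩
    · rw [e1]; exact (projStep_mem F _ _).1
    · rw [e1]; exact projStep_mem F _ _

end Chain

section Chain2
variable {E : Type*} [MetricSpace E] (F : ℝ → NonemptyCompacts E)
variable {P : ℕ → ℝ} {i0 : ℕ} {ym yp : E}

lemma chainY_dist {a b : ℝ} (hBV : BoundedVariationOn F (Set.Icc a b))
    (hPmono : Monotone P) (hPmem : ∀ j, P j ∈ Set.Icc a b)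
    (hpair : (ym, yp) ∈ MetricPairs (F (P i0) : Set E) (F (P (i0 + 1)) : Set E)) :
    ∀ m n, m ≤ n → dist (chainY F P i0 ym yp m) (chainY F P i0 ym yp n) ≤
      vfun F a b (P n) - vfun F a b (P m) := by
  intro m n hmn
  induction n, hmn using Nat.le_induction with
  | base => simp
  | succ n hmn ih =>
    have hstep := MetricPairs.dist_le (chainY_pairs F hpair n)
    simp only at hstep
    have hstep2 : dist (F (P n)) (F (P (n + 1))) ≤ vfun F a b (P (n + 1)) - vfun F a b (P n) :=
      dist_le_vfun hBV (hPmem n) (hPmem (n + 1)) (hPmono (Nat.le_succ n))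
    have htri := dist_triangle (chainY F P i0 ym yp m) (chainY F P i0 ym yp n)
      (chainY F P i0 ym yp (n + 1))
    linarith

end Chain2

namespace RealPartition

variable {a b : ℝ}

noncomputable def idx (χ : RealPartition a b) (t : ℝ) : Fin (χ.n + 1) :=
  if h : (Finset.univ.filter (fun i => χ.pts i ≤ t)).Nonempty then
    (Finset.univ.filter (fun i => χ.pts i ≤ t)).max' h else 0

lemma idx_spec' (χ : RealPartition a b) {t : ℝ}
    (hne : (Finset.univ.filter (fun i => χ.pts i ≤ t)).Nonempty) :
    χ.pts (χ.idx t) ≤ t := by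
  rw [idx, dif_pos hne]
  have := Finset.max'_mem _ hne
  simpa using this

lemma idx_spec (χ : RealPartition a b) {t : ℝ} (ht : a ≤ t) : χ.pts (χ.idx t) ≤ t :=
  χ.idx_spec' ⟨0, by simp [χ.first, ht]⟩

lemma le_idx (χ : RealPartition a b) {t : ℝ} {j} (hj : χ.pts j ≤ t) : j ≤ χ.idx t := by
  have hne : (Finset.univ.filter (fun i => χ.pts i ≤ t)).Nonempty := ⟨j, by simp [hj]⟩
  rw [idx, dif_pos hne]
  exact Finset.le_max' _ _ (by simp [hj])

lemma idx_mono (χ : RealPartition a b) {q t : ℝ} (hqt : q ≤ t) : χ.idx q ≤ χ.idx t := by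
  by_cases hne : (Finset.univ.filter (fun i => χ.pts i ≤ q)).Nonempty
  · exact χ.le_idx ((χ.idx_spec' hne).trans hqt)
  · rw [idx, dif_neg hne]
    exact Fin.zero_le _

lemma idx_eq_castSucc (χ : RealPartition a b) {t : ℝ} {i : Fin χ.n}
    (ht : t ∈ Set.Ico (χ.pts i.castSucc) (χ.pts i.succ)) : χ.idx t = i.castSucc := by
  refine le_antisymm ?_ (χ.le_idx ht.1)
  have h1 : χ.pts (χ.idx t) ≤ t := χ.idx_spec' ⟨i.castSucc, by simp [ht.1]⟩
  have h2 : χ.idx t < i.succ := χ.mono.lt_iff_lt.1 (lt_of_le_of_lt h1 ht.2)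
  rw [Fin.lt_def] at h2
  rw [Fin.le_def]
  simpa using Nat.lt_succ_iff.1 (by simpa using h2)

lemma idx_b (χ : RealPartition a b) : χ.idx b = Fin.last χ.n :=
  le_antisymm (Fin.le_last _) (χ.le_idx (le_of_eq χ.last))

lemma pts_idx_ge (χ : RealPartition a b) {t : ℝ} (ht : t ≤ b) :
    t - χ.meshNorm ≤ χ.pts (χ.idx t) := by
  by_cases h : χ.idx t = Fin.last χ.n
  · rw [h, χ.last]
    linarith [χ.meshNorm_nonneg]
  · have hlt : (χ.idx t).val < χ.n := by
      rcases Nat.lt_succ_iff_lt_or_eq.1 (χ.idx t).isLt with h' | h'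
      · exact h'
      · exact absurd (Fin.ext h' : χ.idx t = Fin.last χ.n) h
    set i : Fin χ.n := ⟨(χ.idx t).val, hlt⟩ with hi
    have hcast : i.castSucc = χ.idx t := by ext; simp [hi]
    have hnot : ¬ χ.pts i.succ ≤ t := by
      intro hle
      have := χ.le_idx hle
      rw [Fin.le_def] at this
      simp [hi] at this
    push_neg at hnot
    have hgap := χ.gap_le_meshNorm i
    rw [hcast] at hgap
    linarith

end RealPartition

section ChainFn

variable {E : Type*} [MetricSpace E] {a b : ℝ}

noncomputable def chainFn (χ : RealPartition a b) (y : Fin (χ.n + 1) → E) : ℝ → E :=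
  fun t => y (χ.idx t)

lemma isChainFun_chainFn (Fs : ℝ → Set E) (χ : RealPartition a b) (y : Fin (χ.n + 1) → E)
    (hpairs : ∀ i : Fin χ.n, (y i.castSucc, y i.succ) ∈
      MetricPairs (Fs (χ.pts i.castSucc)) (Fs (χ.pts i.succ))) :
    IsChainFun Fs χ (chainFn χ y) := by
  refine ⟨y, hpairs, fun i t ht => ?_, ?_⟩
  · rw [chainFn, χ.idx_eq_castSucc ht]
  · rw [chainFn, χ.idx_b]

end ChainFn
section BigChain

variable {E : Type*} [MetricSpace E]

lemma exists_chain {a b : ℝ} (hab : a < b) (F : ℝ → NonemptyCompacts E)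
    (hBV : BoundedVariationOn F (Set.Icc a b))
    {ξm ξp : ℝ} (hξm : ξm ∈ Set.Icc a b) (hξp : ξp ∈ Set.Icc a b) (hlt : ξm < ξp)
    {ym yp : E} (hpair : (ym, yp) ∈ MetricPairs (F ξm : Set E) (F ξp : Set E)) (M : ℕ) :
    ∃ χ : RealPartition a b, ∃ c : ℝ → E,
      IsChainFun (fun t => (F t : Set E)) χ c ∧
      χ.meshNorm ≤ (b - a) / (M + 1) + (ξp - ξm) ∧
      (∀ t, c t ∈ (F (χ.pts (χ.idx t)) : Set E)) ∧
      (∀ q t : ℝ, q ≤ t → dist (c q) (c t) ≤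
        vfun F a b (χ.pts (χ.idx t)) - vfun F a b (χ.pts (χ.idx q))) ∧
      (∀ t, a ≤ t → t < ξm → dist (c t) ym ≤ vfun F a b ξm - vfun F a b (χ.pts (χ.idx t))) ∧
      (∀ t, ξp ≤ t → dist (c t) yp ≤ vfun F a b (χ.pts (χ.idx t)) - vfun F a b ξp) := by
  classical
  set h : ℝ := (b - a) / (M + 1) with hh
  have hhpos : 0 < h := div_pos (by linarith) (by positivity)
  set δ : ℝ := h + (ξp - ξm) with hδ
  have key : ∀ x : ℝ, a ≤ x → x < b → ∃ j : ℕ, j < M + 2 ∧ x < a + j * h ∧ a + j * h ≤ x + h := by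
    intro x hax hxb
    set u : ℝ := (x - a) / h with hu
    have hu0 : 0 ≤ u := div_nonneg (by linarith) hhpos.le
    have hxu : u * h = x - a := div_mul_cancel₀ _ (ne_of_gt hhpos)
    have hMh : (M + 1 : ℝ) * h = b - a := by
      rw [hh]; field_simp
    have hfl0 : (0 : ℤ) ≤ ⌊u⌋ := Int.floor_nonneg.2 hu0
    have hfl1 : (⌊u⌋ : ℝ) ≤ u := Int.floor_le u
    have hfl2 : u < (⌊u⌋ : ℝ) + 1 := Int.lt_floor_add_one u
    have huM : u < M + 1 := by
      rw [hu, div_lt_iff₀ hhpos, hMh]; linarith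
    have hflM : ⌊u⌋ < (M + 1 : ℤ) := by
      have : (⌊u⌋ : ℝ) < M + 1 := lt_of_le_of_lt hfl1 huM
      exact_mod_cast this
    have hcast : ((⌊u⌋.toNat : ℕ) : ℝ) = (⌊u⌋ : ℝ) := by
      exact_mod_cast congrArg (Int.cast : ℤ → ℝ) (Int.toNat_of_nonneg hfl0)
    refine ⟨⌊u⌋.toNat + 1, by omega, ?_, ?_⟩
    · push_cast
      rw [hcast]
      nlinarith [hhpos]
    · push_cast
      rw [hcast]
      nlinarith [hhpos]
  set grid : Finset ℝ := (Finset.range (M + 2)).image (fun j : ℕ => a + j * h) with hgrid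
  set S : Finset ℝ := insert a (insert b (insert ξm (insert ξp
    (grid.filter (fun x => x ≤ ξm ∨ ξp ≤ x))))) with hS
  have haS : a ∈ S := by simp [hS]
  have hbS : b ∈ S := by simp [hS]
  have hξmS : ξm ∈ S := by simp [hS]
  have hξpS : ξp ∈ S := by simp [hS]
  have hSmem : ∀ x ∈ S, x = a ∨ x = b ∨ x = ξm ∨ x = ξp ∨
      ((∃ j : ℕ, j < M + 2 ∧ a + j * h = x) ∧ (x ≤ ξm ∨ ξp ≤ x)) := by
    intro x hx
    simp only [hS, Finset.mem_insert, Finset.mem_filter, hgrid, Finset.mem_image,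
      Finset.mem_range] at hx
    tauto
  have hgridS : ∀ j : ℕ, j < M + 2 → (a + j * h ≤ ξm ∨ ξp ≤ a + j * h) → a + j * h ∈ S := by
    intro j hj hside
    simp only [hS, Finset.mem_insert, Finset.mem_filter, hgrid, Finset.mem_image,
      Finset.mem_range]
    exact Or.inr (Or.inr (Or.inr (Or.inr ⟨⟨j, hj, rfl⟩, hside⟩)))
  have hsub : ∀ x ∈ S, x ∈ Set.Icc a b := by
    intro x hx
    rcases hSmem x hx with rfl | rfl | rfl | rfl | ⟨⟨j, hj, rfl⟩, -⟩
    · exact Set.left_mem_Icc.2 hab.le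
    · exact Set.right_mem_Icc.2 hab.le
    · exact hξm
    · exact hξp
    · constructor
      · nlinarith [hhpos.le, Nat.cast_nonneg (α := ℝ) j]
      · have hjM : (j : ℝ) ≤ M + 1 := by exact_mod_cast Nat.lt_succ_iff.1 hj
        have : (j : ℝ) * h ≤ (M + 1) * h := by nlinarith
        have hMh : (M + 1 : ℝ) * h = b - a := by rw [hh]; field_simp
        linarith
  have hside : ∀ x ∈ S, x ≤ ξm ∨ ξp ≤ x := by
    intro x hx
    rcases hSmem x hx with rfl | rfl | rfl | rfl | ⟨-, hs⟩
    · exact Or.inl hξm.1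
    · exact Or.inr hξp.2
    · exact Or.inl le_rfl
    · exact Or.inr le_rfl
    · exact hs
  have hgap : ∀ x ∈ S, x < b → ∃ y ∈ S, x < y ∧ y ≤ x + δ := by
    intro x hx hxb
    have hax : a ≤ x := (hsub x hx).1
    rcases hside x hx with hle | hge
    · rcases eq_or_lt_of_le hle with rfl | hxlt
      · exact ⟨ξp, hξpS, hlt, by rw [hδ]; linarith⟩
      · obtain ⟨j, hjlt, hxj, hjx⟩ := key x hax hxb
        by_cases hgm : a + j * h ≤ ξm
        · exact ⟨a + j * h, hgridS j hjlt (Or.inl hgm), hxj, by rw [hδ]; linarith⟩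
        · push_neg at hgm
          exact ⟨ξm, hξmS, hxlt, by rw [hδ]; linarith⟩
    · obtain ⟨j, hjlt, hxj, hjx⟩ := key x hax hxb
      refine ⟨a + j * h, hgridS j hjlt (Or.inr (by linarith)), hxj, by rw [hδ]; linarith⟩
  obtain ⟨χ, hmem, hsurj⟩ := RealPartition.exists_ofFinset hab S haS hbS hsub
  have hmesh : χ.meshNorm ≤ δ := RealPartition.meshNorm_le hab χ hmem hsurj hgap
  obtain ⟨i0, hi0⟩ := hsurj ξm hξmS
  obtain ⟨j1, hj1⟩ := hsurj ξp hξpS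
  have hij : i0 < j1 := χ.mono.lt_iff_lt.1 (by rw [hi0, hj1]; exact hlt)
  have hi0n : (i0 : ℕ) < χ.n := by
    have h1 := hij
    rw [Fin.lt_def] at h1
    have h2 := j1.isLt
    omega
  have hnext : χ.pts ⟨(i0 : ℕ) + 1, by omega⟩ = ξp := by
    have hgt : ξm < χ.pts ⟨(i0 : ℕ) + 1, by omega⟩ := by
      rw [← hi0]
      exact χ.mono (by rw [Fin.lt_def]; simp)
    have hle : χ.pts ⟨(i0 : ℕ) + 1, by omega⟩ ≤ ξp := by
      rw [← hj1]
      refine χ.mono.monotone ?_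
      rw [Fin.le_def]
      have h1 := hij
      rw [Fin.lt_def] at h1
      simpa using h1
    rcases eq_or_lt_of_le hle with h' | h'
    · exact h'
    · rcases hside _ (hmem ⟨(i0 : ℕ) + 1, by omega⟩) with hc | hc
      · linarith
      · linarith
  set P : ℕ → ℝ := fun j => χ.pts ⟨min j χ.n, by omega⟩ with hP
  have hPmono : Monotone P := by
    intro i j hij'
    exact χ.mono.monotone (by rw [Fin.le_def]; simp; omega)
  have hPmem : ∀ j, P j ∈ Set.Icc a b := fun j => χ.pts_mem_Icc _
  have hPfin : ∀ i : Fin (χ.n + 1), P (i : ℕ) = χ.pts i := by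
    intro i
    simp only [hP]
    congr 1
    exact Fin.ext (by simpa using Nat.lt_succ_iff.1 i.isLt)
  have hPi0 : P (i0 : ℕ) = ξm := by rw [hPfin i0, hi0]
  have hPi1 : P ((i0 : ℕ) + 1) = ξp := by
    have := hPfin ⟨(i0 : ℕ) + 1, by omega⟩
    simp only at this
    rw [this, hnext]
  have hpairP : (ym, yp) ∈ MetricPairs (F (P (i0 : ℕ)) : Set E)
      (F (P ((i0 : ℕ) + 1)) : Set E) := by
    rw [hPi0, hPi1]; exact hpair
  set Y : ℕ → E := chainY F P (i0 : ℕ) ym yp with hY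
  set y : Fin (χ.n + 1) → E := fun i => Y (i : ℕ) with hy
  have hym : ym ∈ (F (P (i0 : ℕ)) : Set E) := hpairP.1
  have hyp' : yp ∈ (F (P ((i0 : ℕ) + 1)) : Set E) := hpairP.2.1
  have hYmem : ∀ j, Y j ∈ (F (P j) : Set E) := chainY_mem F hym hyp'
  have hYdist := chainY_dist F hBV hPmono hPmem hpairP
  have hcval : ∀ t, chainFn χ y t = Y ((χ.idx t : ℕ)) := fun t => rfl
  refine ⟨χ, chainFn χ y, ?_, by rwa [hδ] at hmesh, ?_, ?_, ?_, ?_⟩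
  · apply isChainFun_chainFn
    intro i
    have hpp := chainY_pairs F hpairP (i : ℕ)
    have e1 : y i.castSucc = Y (i : ℕ) := by rw [hy]; simp
    have e2 : y i.succ = Y ((i : ℕ) + 1) := by rw [hy]; simp
    have e3 : χ.pts i.castSucc = P (i : ℕ) := by
      rw [← hPfin i.castSucc]; simp
    have e4 : χ.pts i.succ = P ((i : ℕ) + 1) := by
      rw [← hPfin i.succ]; simp
    rw [e1, e2, e3, e4]
    exact hpp
  · intro t
    rw [hcval, ← hPfin (χ.idx t)]
    exact hYmem _
  · intro q t hqt
    have hle : ((χ.idx q : ℕ)) ≤ ((χ.idx t : ℕ)) := by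
      have := χ.idx_mono hqt
      rwa [Fin.le_def] at this
    have := hYdist _ _ hle
    rw [hPfin, hPfin] at this
    rw [hcval, hcval]
    exact this
  · intro t hat htm
    have h1 : χ.pts (χ.idx t) ≤ t := χ.idx_spec hat
    have h2 : χ.pts (χ.idx t) < χ.pts i0 := by rw [hi0]; linarith
    have h3 : ((χ.idx t : ℕ)) ≤ (i0 : ℕ) := by
      have := χ.mono.lt_iff_lt.1 h2
      rw [Fin.lt_def] at this
      omega
    have := hYdist _ _ h3
    rw [← hY] at this
    rw [hPi0, hPfin] at this
    have hanchor : Y (i0 : ℕ) = ym := chainY_anchor_left F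
    rw [hanchor] at this
    rw [hcval]
    exact this
  · intro t hpt
    have h1 : (⟨(i0 : ℕ) + 1, by omega⟩ : Fin (χ.n + 1)) ≤ χ.idx t :=
      χ.le_idx (by rw [hnext]; exact hpt)
    have h2 : (i0 : ℕ) + 1 ≤ ((χ.idx t : ℕ)) := by
      rw [Fin.le_def] at h1
      simpa using h1
    have := hYdist _ _ h2
    rw [← hY] at this
    rw [hPi1, hPfin] at this
    have hanchor : Y ((i0 : ℕ) + 1) = yp := chainY_anchor_right F
    rw [hanchor] at this
    rw [hcval]
    rw [dist_comm] at this
    exact this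

end BigChain
section Extraction

variable {E : Type*} [MetricSpace E]

lemma exists_subseq_tendsto_on_countable {D : Set ℝ} (hD : D.Countable)
    {K : Set E} (hK : IsCompact K) (c : ℕ → ℝ → E) (hc : ∀ k x, c k x ∈ K) :
    ∃ φ : ℕ → ℕ, StrictMono φ ∧
      ∀ x ∈ D, ∃ L, Tendsto (fun k => c (φ k) x) atTop (𝓝 L) := by
  haveI := hD.to_subtype
  set g : ℕ → (D → E) := fun k q => c k (q : ℝ) with hg
  have hKc : IsCompact {f : D → E | ∀ q, f q ∈ K} := by
    have h1 := isCompact_univ_pi (fun _ : D => hK)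
    convert h1 using 1
    ext f
    simp [Set.mem_univ_pi]
  obtain ⟨f, -, φ, hφ, hconv⟩ := hKc.tendsto_subseq (x := g) (fun k q => hc _ _)
  refine ⟨φ, hφ, fun x hx => ⟨f ⟨x, hx⟩, ?_⟩⟩
  exact ((continuous_apply (⟨x, hx⟩ : D)).tendsto f).comp hconv

end Extraction
/-- under Property 2 at `ξ`, `(1/2)F(ξ-) ⊕ (1/2)F(ξ+) ⊆ A_F(ξ)`: every
metric pair `(y⁻, y⁺)` of the one-sided limits is realized as `(s(ξ-), s(ξ+))` for some
metric selection `s`, whence the midpoint belongs to the limit set. -/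
theorem stmt_15 {d : ℕ} (a b : ℝ) (hab : a < b)
    (F : ℝ → NonemptyCompacts (EuclideanSpace ℝ (Fin d)))
    (hBV : BoundedVariationOn F (Set.Icc a b))
    (hgraph : HasCompactGraph (fun t => (F t : Set (EuclideanSpace ℝ (Fin d)))) a b)
    (ξ : ℝ) (hξ : ξ ∈ Set.Ioo a b)
    (Fm Fp : NonemptyCompacts (EuclideanSpace ℝ (Fin d)))
    (hFm : Filter.Tendsto F (nhdsWithin ξ (Set.Ico a ξ)) (nhds Fm))
    (hFp : Filter.Tendsto F (nhdsWithin ξ (Set.Ioc ξ b)) (nhds Fp))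
    (hP2 : Property2 (fun t => (F t : Set (EuclideanSpace ℝ (Fin d)))) a b ξ
      (Fm : Set (EuclideanSpace ℝ (Fin d))) (Fp : Set (EuclideanSpace ℝ (Fin d)))) :
    (∀ ym yp : EuclideanSpace ℝ (Fin d),
      (ym, yp) ∈ MetricPairs (Fm : Set (EuclideanSpace ℝ (Fin d)))
        (Fp : Set (EuclideanSpace ℝ (Fin d))) →
      ∃ s : ℝ → EuclideanSpace ℝ (Fin d),
        IsMetricSelection (fun t => (F t : Set (EuclideanSpace ℝ (Fin d)))) a b s ∧
        Filter.Tendsto s (nhdsWithin ξ (Set.Ico a ξ)) (nhds ym) ∧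
        Filter.Tendsto s (nhdsWithin ξ (Set.Ioc ξ b)) (nhds yp)) ∧
    metricAvg (Fm : Set (EuclideanSpace ℝ (Fin d))) (Fp : Set (EuclideanSpace ℝ (Fin d)))
      ⊆ limitSet (fun t => (F t : Set (EuclideanSpace ℝ (Fin d)))) a b ξ := by
  classical
  have hξa : a < ξ := hξ.1
  have hξb : ξ < b := hξ.2
  set V : ℝ → ℝ := vfun F a b with hV
  have hVmono : Monotone V := vfun_mono hBV
  have main : ∀ ym yp : EuclideanSpace ℝ (Fin d),
      (ym, yp) ∈ MetricPairs (Fm : Set (EuclideanSpace ℝ (Fin d)))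
        (Fp : Set (EuclideanSpace ℝ (Fin d))) →
      ∃ s : ℝ → EuclideanSpace ℝ (Fin d),
        IsMetricSelection (fun t => (F t : Set (EuclideanSpace ℝ (Fin d)))) a b s ∧
        Filter.Tendsto s (nhdsWithin ξ (Set.Ico a ξ)) (nhds ym) ∧
        Filter.Tendsto s (nhdsWithin ξ (Set.Ioc ξ b)) (nhds yp) := by
    intro ym yp hpair
    obtain ⟨ξm, ξp, ym', yp', hξmI, hξpI, hξmT, hξpT, hpairs, hymT, hypT⟩ := hP2 ym yp hpair
    have hξmb : ∀ k, ξm k ∈ Set.Icc a b :=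
      fun k => ⟨(hξmI k).1, le_of_lt ((hξmI k).2.trans hξb)⟩
    have hξpb : ∀ k, ξp k ∈ Set.Icc a b :=
      fun k => ⟨le_of_lt (hξa.trans (hξpI k).1), (hξpI k).2⟩
    have hmp : ∀ k, ξm k < ξp k := fun k => lt_trans (hξmI k).2 (hξpI k).1
    have hchain := fun k : ℕ =>
      exists_chain hab F hBV (hξmb k) (hξpb k) (hmp k) (hpairs k) k
    choose χ c hIsChain hmesh hcmem hcdist hcleft hcright using hchain
    -- the compact set of values
    have hK : IsCompact (Prod.snd ''
        {p : ℝ × EuclideanSpace ℝ (Fin d) | p.1 ∈ Set.Icc a b ∧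
          p.2 ∈ (F p.1 : Set (EuclideanSpace ℝ (Fin d)))}) :=
      hgraph.image continuous_snd
    have hcK : ∀ k x, c k x ∈ Prod.snd ''
        {p : ℝ × EuclideanSpace ℝ (Fin d) | p.1 ∈ Set.Icc a b ∧
          p.2 ∈ (F p.1 : Set (EuclideanSpace ℝ (Fin d)))} := by
      intro k x
      exact ⟨((χ k).pts ((χ k).idx x), c k x),
        ⟨(χ k).pts_mem_Icc _, hcmem k x⟩, rfl⟩
    -- countable exceptional set
    set D : Set ℝ := {x | ¬ContinuousAt V x} ∪ Set.range ((↑) : ℚ → ℝ) ∪ {a, b, ξ} with hD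
    have hDc : D.Countable :=
      ((hVmono.countable_not_continuousAt.union (countable_range _)).union
        (Set.Finite.countable (by simp)))
    obtain ⟨φ, hφ, hDconv⟩ := exists_subseq_tendsto_on_countable hDc hK c hcK
    -- mesh of the subsequence tends to 0
    have hδ0 : Tendsto (fun k : ℕ => (b - a) / (k + 1) + (ξp k - ξm k)) atTop (𝓝 0) := by
      have h1 : Tendsto (fun k : ℕ => (b - a) / (k + 1)) atTop (𝓝 0) := by
        have := tendsto_one_div_add_atTop_nhds_zero_nat.const_mul (b - a)
        simpa [div_eq_mul_inv, mul_comm] using this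
      have h2 : Tendsto (fun k => ξp k - ξm k) atTop (𝓝 0) := by
        have := hξpT.sub hξmT
        simpa using this
      simpa using h1.add h2
    have hmesh0 : Tendsto (fun k => (χ (φ k)).meshNorm) atTop (𝓝 0) := by
      apply squeeze_zero (fun k => (χ (φ k)).meshNorm_nonneg)
        (fun k => hmesh (φ k))
      exact hδ0.comp hφ.tendsto_atTop
    -- partition point below t
    set pt : ℕ → ℝ → ℝ := fun k t => (χ (φ k)).pts ((χ (φ k)).idx t) with hpt
    have hptle : ∀ k t, a ≤ t → pt k t ≤ t := fun k t ht => (χ (φ k)).idx_spec ht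
    have hptge : ∀ k t, t ≤ b → t - (χ (φ k)).meshNorm ≤ pt k t :=
      fun k t ht => (χ (φ k)).pts_idx_ge ht
    have hptIcc : ∀ k t, pt k t ∈ Set.Icc a b := fun k t => (χ (φ k)).pts_mem_Icc _
    -- convergence everywhere on [a, b]
    have hconv : ∀ x ∈ Set.Icc a b, ∃ L,
        Tendsto (fun k => c (φ k) x) atTop (𝓝 L) := by
      intro x hx
      by_cases hxD : x ∈ D
      · exact hDconv x hxD
      · have hVx : ContinuousAt V x := by
          by_contra hcont
          exact hxD (Or.inl (Or.inl hcont))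
        have hax : a < x := by
          rcases lt_or_eq_of_le hx.1 with h' | h'
          · exact h'
          · exact absurd (Or.inr (by simp [← h'])) hxD
        apply cauchySeq_tendsto_of_complete
        rw [Metric.cauchySeq_iff]
        intro ε hε
        obtain ⟨η, hη, hVcont⟩ := Metric.continuousAt_iff.1 hVx (ε / 5) (by positivity)
        obtain ⟨q, hq1, hq2⟩ := exists_rat_btwn (show max a (x - η) < x from
          max_lt hax (by linarith))
        have hqa : a < (q : ℝ) := lt_of_le_of_lt (le_max_left _ _) hq1
        have hqη : x - η < (q : ℝ) := lt_of_le_of_lt (le_max_right _ _) hq1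
        have hqD : (q : ℝ) ∈ D := Or.inl (Or.inr ⟨q, rfl⟩)
        obtain ⟨Lq, hLq⟩ := hDconv q hqD
        have hqCauchy := hLq.cauchySeq
        rw [Metric.cauchySeq_iff] at hqCauchy
        obtain ⟨N2, hN2⟩ := hqCauchy (ε / 5) (by positivity)
        have hev : ∀ᶠ k in atTop, (χ (φ k)).meshNorm < (q : ℝ) - (x - η) :=
          hmesh0.eventually_lt_const (by linarith : (0:ℝ) < (q : ℝ) - (x - η))
        obtain ⟨N1, hN1⟩ := hev.exists_forall_of_atTop
        -- key per-k estimate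
        have hkey : ∀ k ≥ N1, dist (c (φ k) q) (c (φ k) x) < 2 * (ε / 5) := by
          intro k hk
          have hmk := hN1 k hk
          have h1 : dist (c (φ k) q) (c (φ k) x) ≤ V (pt k x) - V (pt k q) :=
            hcdist (φ k) (q : ℝ) x (le_of_lt hq2)
          have hx1 : dist (pt k x) x < η := by
            rw [Real.dist_eq, abs_lt]
            have h2 := hptle k x hax.le
            have h3 := hptge k x hx.2
            constructor <;> nlinarith
          have hq1' : dist (pt k q) x < η := by
            rw [Real.dist_eq, abs_lt]
            have h2 := hptle k q hqa.le
            have h3 := hptge k q (by linarith [hx.2] : (q : ℝ) ≤ b)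
            constructor <;> nlinarith
          have e1 := hVcont hx1
          have e2 := hVcont hq1'
          rw [Real.dist_eq] at e1 e2
          rw [abs_lt] at e1 e2
          linarith
        refine ⟨max N1 N2, fun j hj m hm => ?_⟩
        have hd1 := hkey j (le_trans (le_max_left _ _) hj)
        have hd2 := hkey m (le_trans (le_max_left _ _) hm)
        have hd3 := hN2 j (le_trans (le_max_right _ _) hj) m (le_trans (le_max_right _ _) hm)
        have htri1 := dist_triangle (c (φ j) x) (c (φ j) q) (c (φ m) x)
        have htri2 := dist_triangle (c (φ j) q) (c (φ m) q) (c (φ m) x)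
        have hsymm1 : dist (c (φ j) x) (c (φ j) q) = dist (c (φ j) q) (c (φ j) x) :=
          dist_comm _ _
        have hsymm2 : dist (c (φ m) q) (c (φ m) x) = dist (c (φ m) q) (c (φ m) x) := rfl
        calc dist (c (φ j) x) (c (φ m) x)
            ≤ dist (c (φ j) x) (c (φ j) q) + dist (c (φ j) q) (c (φ m) x) := htri1
          _ ≤ dist (c (φ j) x) (c (φ j) q) + (dist (c (φ j) q) (c (φ m) q)
              + dist (c (φ m) q) (c (φ m) x)) := by linarith [htri2]
          _ < ε := by
              rw [hsymm1]
              have := dist_comm (c (φ m) q) (c (φ m) x)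
              linarith [hd1, hd2, hd3, dist_comm (c (φ m) x) (c (φ m) q)]
    choose sfun hsfun using hconv
    set s : ℝ → EuclideanSpace ℝ (Fin d) := fun x =>
      if hx : x ∈ Set.Icc a b then sfun x hx else ym with hs_def
    have hs : ∀ x (hx : x ∈ Set.Icc a b),
        Tendsto (fun k => c (φ k) x) atTop (𝓝 (s x)) := by
      intro x hx
      rw [hs_def]
      simp only [dif_pos hx]
      exact hsfun x hx
    -- pt k x tends to x
    have hptT : ∀ x ∈ Set.Icc a b, Tendsto (fun k => pt k x) atTop (𝓝 x) := by
      intro x hx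
      have hup : ∀ k, pt k x ≤ x := fun k => hptle k x hx.1
      have hlow : ∀ k, x - (χ (φ k)).meshNorm ≤ pt k x := fun k => hptge k x hx.2
      have h1 : Tendsto (fun k => x - (χ (φ k)).meshNorm) atTop (𝓝 x) := by
        have := (tendsto_const_nhds (x := x) (f := atTop (α := ℕ))).sub hmesh0
        simpa using this
      exact tendsto_of_tendsto_of_tendsto_of_le_of_le h1 tendsto_const_nhds hlow hup
    -- selection property
    have hsel : ∀ x ∈ Set.Icc a b, s x ∈ (F x : Set (EuclideanSpace ℝ (Fin d))) := by
      intro x hx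
      have hGclosed : IsClosed {p : ℝ × EuclideanSpace ℝ (Fin d) | p.1 ∈ Set.Icc a b ∧
          p.2 ∈ (F p.1 : Set (EuclideanSpace ℝ (Fin d)))} := hgraph.isClosed
      have hmemG : ∀ k, (pt k x, c (φ k) x) ∈ {p : ℝ × EuclideanSpace ℝ (Fin d) |
          p.1 ∈ Set.Icc a b ∧ p.2 ∈ (F p.1 : Set (EuclideanSpace ℝ (Fin d)))} :=
        fun k => ⟨hptIcc k x, hcmem (φ k) x⟩
      have hlim := hGclosed.mem_of_tendsto
        (((hptT x hx).prodMk_nhds (hs x hx))) (Filter.Eventually.of_forall hmemG)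
      exact hlim.2
    have hMS : IsMetricSelection (fun t => (F t : Set (EuclideanSpace ℝ (Fin d)))) a b s :=
      ⟨hsel, fun k => χ (φ k), fun k => c (φ k), fun k => hIsChain (φ k), hmesh0,
        fun x hx => hs x hx⟩
    -- limits of the auxiliary sequences along the subsequence
    have hξmT' : Tendsto (fun k => ξm (φ k)) atTop (𝓝 ξ) := hξmT.comp hφ.tendsto_atTop
    have hξpT' : Tendsto (fun k => ξp (φ k)) atTop (𝓝 ξ) := hξpT.comp hφ.tendsto_atTop
    have hymT' : Tendsto (fun k => ym' (φ k)) atTop (𝓝 ym) := hymT.comp hφ.tendsto_atTop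
    have hypT' : Tendsto (fun k => yp' (φ k)) atTop (𝓝 yp) := hypT.comp hφ.tendsto_atTop
    -- the sup/inf of V around ξ
    have hVub : ∀ t : ℝ, V t ≤ (eVariationOn F (Set.Icc a b)).toReal := by
      intro t
      exact ENNReal.toReal_mono hBV (eVariationOn.mono F (Set.Icc_subset_Icc le_rfl (min_le_left _ _)))
    have hVnonneg : ∀ t : ℝ, 0 ≤ V t := fun t => ENNReal.toReal_nonneg
    set Lm : ℝ := sSup (V '' Set.Iio ξ) with hLm
    have hbddm : BddAbove (V '' Set.Iio ξ) :=
      ⟨(eVariationOn F (Set.Icc a b)).toReal, fun y ⟨t, _, ht⟩ => ht ▸ hVub t⟩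
    have hnem : (V '' Set.Iio ξ).Nonempty := ⟨V a, ⟨a, hξa, rfl⟩⟩
    have hVleLm : ∀ t < ξ, V t ≤ Lm := fun t ht => le_csSup hbddm ⟨t, ht, rfl⟩
    set Lp : ℝ := sInf (V '' Set.Ioi ξ) with hLp
    have hbddp : BddBelow (V '' Set.Ioi ξ) := ⟨0, fun y ⟨t, _, ht⟩ => ht ▸ hVnonneg t⟩
    have hnep : (V '' Set.Ioi ξ).Nonempty := ⟨V b, ⟨b, hξb, rfl⟩⟩
    have hLpleV : ∀ t, ξ < t → Lp ≤ V t := fun t ht => csInf_le hbddp ⟨t, ht, rfl⟩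
    -- pointwise bound on the left
    have hptwL : ∀ x ∈ Set.Ico a ξ, ∀ t0 < x, dist (s x) ym ≤ Lm - V t0 := by
      intro x hx t0 ht0
      have hxIcc : x ∈ Set.Icc a b := ⟨hx.1, le_of_lt (hx.2.trans hξb)⟩
      have hA : Tendsto (fun k => dist (c (φ k) x) ym) atTop (𝓝 (dist (s x) ym)) :=
        (hs x hxIcc).dist tendsto_const_nhds
      have hB : Tendsto (fun k => (Lm - V t0) + dist (ym' (φ k)) ym) atTop
          (𝓝 (Lm - V t0)) := by
        have := (tendsto_const_nhds (x := Lm - V t0) (f := atTop (α := ℕ))).add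
          (tendsto_iff_dist_tendsto_zero.1 hymT')
        simpa using this
      refine le_of_tendsto_of_tendsto hA hB ?_
      have hev1 : ∀ᶠ k in atTop, x < ξm (φ k) :=
        hξmT'.eventually_const_lt hx.2
      have hev2 : ∀ᶠ k in atTop, (χ (φ k)).meshNorm < x - t0 :=
        hmesh0.eventually_lt_const (by linarith : (0:ℝ) < x - t0)
      filter_upwards [hev1, hev2] with k hk1 hk2
      have h1 : dist (c (φ k) x) (ym' (φ k)) ≤ V (ξm (φ k)) - V (pt k x) :=
        hcleft (φ k) x hx.1 hk1
      have h2 : V (ξm (φ k)) ≤ Lm := hVleLm _ ((hξmI (φ k)).2)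
      have h3 : V t0 ≤ V (pt k x) := by
        apply hVmono
        have := hptge k x hxIcc.2
        linarith
      have htri := dist_triangle (c (φ k) x) (ym' (φ k)) ym
      linarith
    -- pointwise bound on the right
    have hptwR : ∀ x ∈ Set.Ioc ξ b, dist (s x) yp ≤ V x - Lp := by
      intro x hx
      have hxIcc : x ∈ Set.Icc a b := ⟨le_of_lt (hξa.trans hx.1), hx.2⟩
      have hA : Tendsto (fun k => dist (c (φ k) x) yp) atTop (𝓝 (dist (s x) yp)) :=
        (hs x hxIcc).dist tendsto_const_nhds
      have hB : Tendsto (fun k => (V x - Lp) + dist (yp' (φ k)) yp) atTop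
          (𝓝 (V x - Lp)) := by
        have := (tendsto_const_nhds (x := V x - Lp) (f := atTop (α := ℕ))).add
          (tendsto_iff_dist_tendsto_zero.1 hypT')
        simpa using this
      refine le_of_tendsto_of_tendsto hA hB ?_
      have hev1 : ∀ᶠ k in atTop, ξp (φ k) < x := hξpT'.eventually_lt_const hx.1
      filter_upwards [hev1] with k hk1
      have h1 : dist (c (φ k) x) (yp' (φ k)) ≤ V (pt k x) - V (ξp (φ k)) :=
        hcright (φ k) x (le_of_lt hk1)
      have h2 : Lp ≤ V (ξp (φ k)) := hLpleV _ ((hξpI (φ k)).1)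
      have h3 : V (pt k x) ≤ V x := hVmono (hptle k x hxIcc.1)
      have htri := dist_triangle (c (φ k) x) (yp' (φ k)) yp
      linarith
    -- left limit
    have hleft : Tendsto s (𝓝[Set.Ico a ξ] ξ) (𝓝 ym) := by
      rw [Metric.tendsto_nhdsWithin_nhds]
      intro ε hε
      obtain ⟨y0, ⟨t0, ht0ξ, rfl⟩, hy0⟩ := exists_lt_of_lt_csSup hnem
        (show Lm - ε / 2 < Lm by linarith)
      refine ⟨ξ - t0, sub_pos.2 (Set.mem_Iio.1 ht0ξ), ?_⟩
      intro x hx hdist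
      rw [Real.dist_eq, abs_lt] at hdist
      have hxt0 : t0 < x := by linarith [hdist.1]
      have := hptwL x hx t0 hxt0
      calc dist (s x) ym ≤ Lm - V t0 := this
        _ < ε := by linarith
    -- right limit
    have hright : Tendsto s (𝓝[Set.Ioc ξ b] ξ) (𝓝 yp) := by
      rw [Metric.tendsto_nhdsWithin_nhds]
      intro ε hε
      obtain ⟨y0, ⟨t0, ht0ξ, rfl⟩, hy0⟩ := exists_lt_of_csInf_lt hnep
        (show Lp < Lp + ε / 2 by linarith)
      refine ⟨t0 - ξ, sub_pos.2 (Set.mem_Ioi.1 ht0ξ), ?_⟩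
      intro x hx hdist
      rw [Real.dist_eq, abs_lt] at hdist
      have hxt0 : x < t0 := by linarith [hdist.2]
      have h1 := hptwR x hx
      have h2 : V x ≤ V t0 := hVmono hxt0.le
      calc dist (s x) yp ≤ V x - Lp := h1
        _ < ε := by linarith
    exact ⟨s, hMS, hleft, hright⟩
  refine ⟨main, ?_⟩
  rintro v ⟨p, hp, rfl⟩
  obtain ⟨s, hMS, h1, h2⟩ := main p.1 p.2 hp
  exact ⟨s, p.1, p.2, hMS, h1, h2, rfl⟩
end
end
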